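/- Let n ≥ 2, r ≥ 2, let s = gcd(n, r), and write n = x·s, r = y·s with gcd(x,y) = 1. If x and y have opposite parities (exactly one of them is even), then det(I_r + S_rⁿ) = 2^s. -/

import Mathlib

open Matrix


lemma det_cycle (y : ℕ) [NeZero y] (d : Fin y → ℤ) :
    (Matrix.of fun t t' : Fin y =>
      (if t' = t then (1:ℤ) else 0) + (if t' = t + 1 then d t else 0)).det
    = 1 + (-1)^(y-1) * ∏ t, d t := by
  obtain ⟨m, rfl⟩ : ∃ m, y = m + 1 := ⟨y - 1, by have := NeZero.pos y; omega⟩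
  rcases Nat.eq_zero_or_pos m with rfl | hm
  · rw [Matrix.det_fin_one]
    norm_num
    exact (Fin.prod_univ_one d).symm
  · set A : Matrix (Fin (m+1)) (Fin (m+1)) ℤ := Matrix.of fun t t' =>
      (if t' = t then (1:ℤ) else 0) + (if t' = t + 1 then d t else 0) with hA
    have hval : ∀ a : Fin (m+1), ((a + 1 : Fin (m+1)) : ℕ) = ((a:ℕ) + 1) % (m+1) := by
      intro a
      simp [Fin.add_def, Fin.val_one', Nat.mod_eq_of_lt (show 1 < m+1 by omega)]
    have hmod : ∀ a : ℕ, a < m + 1 → (a+1) % (m+1) = if a = m then 0 else a+1 := by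
      intro a ha
      split
      · subst ‹a = m›; simp
      · exact Nat.mod_eq_of_lt (by omega)
    have hsucc : ∀ a b : Fin (m+1), (b = a + 1) ↔
        ((a:ℕ) = m ∧ (b:ℕ) = 0) ∨ ((a:ℕ) < m ∧ (b:ℕ) = (a:ℕ) + 1) := by
      intro a b
      rw [Fin.ext_iff, hval, hmod a a.isLt]
      have := a.isLt; have := b.isLt
      split <;> omega
    have hAapp : ∀ a b : Fin (m+1), A a b =
        (if b = a then (1:ℤ) else 0) + (if b = a + 1 then d a else 0) := fun a b => rfl
    rw [Matrix.det_succ_column_zero]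
    have hlast0 : (0 : Fin (m+1)) ≠ Fin.last m := by
      simp only [ne_eq, Fin.ext_iff, Fin.val_zero, Fin.val_last]; omega
    have hsub : ∑ i : Fin (m+1), (-1:ℤ)^(i:ℕ) * A i 0 * (A.submatrix i.succAbove Fin.succ).det
        = ∑ i ∈ ({0, Fin.last m} : Finset (Fin (m+1))),
            (-1:ℤ)^(i:ℕ) * A i 0 * (A.submatrix i.succAbove Fin.succ).det := by
      refine (Finset.sum_subset (Finset.subset_univ _) ?_).symm
      intro i _ hi
      simp only [Finset.mem_insert, Finset.mem_singleton, not_or] at hi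
      have hi0 : (i:ℕ) ≠ 0 := fun h => hi.1 (Fin.ext (by simpa using h))
      have him : (i:ℕ) ≠ m := fun h => hi.2 (Fin.ext (by simpa [Fin.val_last] using h))
      have c1 : ¬ ((0:Fin (m+1)) = i) := fun h => hi0 (by simpa using (congrArg Fin.val h).symm)
      have c2 : ¬ ((0:Fin (m+1)) = i + 1) := by
        rw [hsucc]; simp only [Fin.val_zero]; omega
      rw [hAapp, if_neg c1, if_neg c2]
      ring
    rw [hsub, Finset.sum_pair hlast0]
    have hA00 : A 0 0 = 1 := by
      have c2 : ¬ ((0:Fin (m+1)) = 0 + 1) := by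
        rw [hsucc]; simp only [Fin.val_zero]; omega
      rw [hAapp, if_pos rfl, if_neg c2]; ring
    have hAl0 : A (Fin.last m) 0 = d (Fin.last m) := by
      have c1 : ¬ ((0:Fin (m+1)) = Fin.last m) := hlast0
      have c2 : (0:Fin (m+1)) = Fin.last m + 1 := by
        rw [hsucc]; simp only [Fin.val_zero, Fin.val_last]; first | omega | tauto
      rw [hAapp, if_neg c1, if_pos c2]; ring
    have hm1 : (A.submatrix (Fin.succAbove 0) Fin.succ).det = 1 := by
      rw [Matrix.det_of_upperTriangular]
      · apply Finset.prod_eq_one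
        intro t _
        have c2 : ¬ (t.succ = t.succ + 1) := by
          rw [hsucc]; simp only [Fin.val_succ]
          have := t.isLt; omega
        simp only [Matrix.submatrix_apply, Fin.succAbove_zero]
        rw [hAapp, if_pos rfl, if_neg c2]; ring
      · intro t t' hlt
        have hlt' : (t':ℕ) < (t:ℕ) := hlt
        have c1 : ¬ (t'.succ = t.succ) := by
          intro h; have := congrArg Fin.val h
          simp only [Fin.val_succ] at this; omega
        have c2 : ¬ (t'.succ = t.succ + 1) := by
          rw [hsucc]; simp only [Fin.val_succ]
          have := t'.isLt; omega
        simp only [Matrix.submatrix_apply, Fin.succAbove_zero]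
        rw [hAapp, if_neg c1, if_neg c2]; ring
    have hm2 : (A.submatrix (Fin.succAbove (Fin.last m)) Fin.succ).det
        = ∏ t : Fin m, d t.castSucc := by
      rw [Matrix.det_of_lowerTriangular]
      · apply Finset.prod_congr rfl
        intro t _
        have c1 : ¬ (t.succ = t.castSucc) := by
          intro h; have := congrArg Fin.val h
          simp only [Fin.val_succ, Fin.coe_castSucc] at this; omega
        have c2 : t.succ = t.castSucc + 1 := by
          rw [hsucc]; simp only [Fin.val_succ, Fin.coe_castSucc]
          have := t.isLt; first | omega | tauto
        simp only [Matrix.submatrix_apply, Fin.succAbove_last]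
        rw [hAapp, if_neg c1, if_pos c2]; ring
      · intro t t' hlt
        have hlt' : (t:ℕ) < (t':ℕ) := hlt
        have c1 : ¬ (t'.succ = t.castSucc) := by
          intro h; have := congrArg Fin.val h
          simp only [Fin.val_succ, Fin.coe_castSucc] at this; omega
        have c2 : ¬ (t'.succ = t.castSucc + 1) := by
          rw [hsucc]; simp only [Fin.val_succ, Fin.coe_castSucc]
          have := t'.isLt; have := t.isLt; omega
        simp only [Matrix.submatrix_apply, Fin.succAbove_last]
        rw [hAapp, if_neg c1, if_neg c2]; ring
    rw [hA00, hAl0, hm1, hm2]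
    rw [Fin.prod_univ_castSucc]
    simp only [Fin.val_last, Fin.val_zero, pow_zero, Nat.add_sub_cancel]
    ring


lemma pow_shift (r : ℕ) (hr : 2 ≤ r) (S : Matrix (Fin r) (Fin r) ℤ)
    (hS : ∀ i j : Fin r, S i j =
      if (i : ℕ) + 1 = (j : ℕ) then 1
      else if (i : ℕ) = r - 1 ∧ (j : ℕ) = 0 then -1 else 0)
    (n : ℕ) :
    S ^ n = Matrix.of (fun i j : Fin r =>
      if ((i:ℕ) + n) % r = (j:ℕ) then (-1:ℤ)^(((i:ℕ) + n)/r) else 0) := by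
  induction n with
  | zero =>
    ext i j
    have h1 : ((i:ℕ) + 0) % r = (i:ℕ) := by
      rw [Nat.add_zero]; exact Nat.mod_eq_of_lt i.isLt
    have h2 : ((i:ℕ) + 0) / r = 0 := by
      rw [Nat.add_zero]; exact Nat.div_eq_of_lt i.isLt
    simp only [pow_zero, Matrix.one_apply, Matrix.of_apply, h1, h2, pow_zero]
    by_cases h : i = j
    · rw [if_pos h, if_pos (congrArg Fin.val h)]
    · rw [if_neg h, if_neg (fun hv => h (Fin.ext hv))]
  | succ n ih =>
    rw [pow_succ, ih]
    ext i j
    rw [Matrix.mul_apply]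
    set k0 : Fin r := ⟨((i:ℕ) + n) % r, Nat.mod_lt _ (by omega)⟩ with hk0
    rw [Finset.sum_eq_single k0]
    · -- main term
      have hik0 : Matrix.of (fun i j : Fin r =>
          if ((i:ℕ) + n) % r = (j:ℕ) then (-1:ℤ)^(((i:ℕ) + n)/r) else 0) i k0
          = (-1:ℤ)^(((i:ℕ) + n)/r) := by
        simp [hk0]
      rw [hik0, hS]
      set a : ℕ := (i:ℕ) + n with ha
      have haa : (i:ℕ) + (n+1) = a + 1 := by omega
      have hlt : a % r < r := Nat.mod_lt _ (by omega)
      have hjlt : (j:ℕ) < r := j.isLt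
      have hmod1 : (a+1) % r = (a % r + 1) % r := (Nat.mod_add_mod a r 1).symm
      have hk0v : (k0:ℕ) = a % r := rfl
      simp only [Matrix.of_apply]
      rw [haa]
      simp only [hk0v]
      by_cases hc : a % r = r - 1
      · have h0 : (a+1) % r = 0 := by
          rw [hmod1, hc, show r - 1 + 1 = r by omega, Nat.mod_self]
        have hdvd : r ∣ a + 1 := Nat.dvd_of_mod_eq_zero h0
        have hdiv : (a+1)/r = a/r + 1 := by
          rw [Nat.succ_div, if_pos hdvd]
        rw [h0, hdiv, hc]
        rw [if_neg (by omega : ¬ (r - 1 + 1 = (j:ℕ)))]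
        by_cases hj : (j:ℕ) = 0
        · rw [if_pos (⟨rfl, hj⟩ : r - 1 = r - 1 ∧ (j:ℕ) = 0), if_pos hj.symm, pow_succ]
        · rw [if_neg (fun h => hj h.2), if_neg (fun h => hj h.symm)]
          ring
      · have h1 : a % r + 1 < r := by omega
        have h2 : (a+1) % r = a % r + 1 := by
          rw [hmod1]; exact Nat.mod_eq_of_lt h1
        have hnd : ¬ r ∣ a + 1 := by
          intro hd
          have h0 : (a+1) % r = 0 := Nat.mod_eq_zero_of_dvd hd
          omega
        have hdiv : (a+1)/r = a/r := by
          rw [Nat.succ_div, if_neg hnd, Nat.add_zero]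
        rw [h2, hdiv]
        by_cases hj : a % r + 1 = (j:ℕ)
        · rw [if_pos hj, if_pos hj]; ring
        · rw [if_neg hj, if_neg hj, if_neg (fun h : _ ∧ _ => hc h.1)]; ring
    · intro b _ hb
      have : Matrix.of (fun i j : Fin r =>
          if ((i:ℕ) + n) % r = (j:ℕ) then (-1:ℤ)^(((i:ℕ) + n)/r) else 0) i b = 0 := by
        simp only [Matrix.of_apply]
        rw [if_neg]
        intro hv
        exact hb (Fin.ext (by simp [hk0, hv]))
      rw [this, zero_mul]
    · intro h
      exact absurd (Finset.mem_univ k0) h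


/-- with `s = gcd(n,r)`, `n = x·s`, `r = y·s`, `gcd(x,y) = 1`,
if `x` and `y` have opposite parities then `det(I + S_rⁿ) = 2^s`. -/
theorem stmt_14 (n r x y s : ℕ) (hn : 2 ≤ n) (hr : 2 ≤ r)
    (hs : s = Nat.gcd n r) (hx : n = x * s) (hy : r = y * s)
    (hxy : Nat.gcd x y = 1)
    (hpar : (Even x ∧ Odd y) ∨ (Odd x ∧ Even y))
    (Sr : Matrix (Fin r) (Fin r) ℤ)
    (hSr : ∀ i j : Fin r, Sr i j =
      if (i : ℕ) + 1 = (j : ℕ) then 1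
      else if (i : ℕ) = r - 1 ∧ (j : ℕ) = 0 then -1 else 0) :
    (1 + Sr ^ n).det = 2 ^ s := by
  have hr0 : 0 < r := by omega
  have hs0 : 0 < s := by
    rw [hs]; exact Nat.gcd_pos_of_pos_left _ (by omega)
  have hy0 : 0 < y := by
    rcases Nat.eq_zero_or_pos y with h | h
    · rw [h] at hy; omega
    · exact h
  have hx0 : 0 < x := by
    rcases Nat.eq_zero_or_pos x with h | h
    · rw [h] at hx; omega
    · exact h
  haveI : NeZero y := ⟨hy0.ne'⟩
  have hyn : y * n = x * r := by rw [hx, hy]; ring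
  -- the function realizing the cycle decomposition
  set f : Fin y × Fin s → Fin r :=
    fun p => ⟨((p.2 : ℕ) + (p.1 : ℕ) * n) % r, Nat.mod_lt _ hr0⟩ with hf
  have hfval : ∀ p : Fin y × Fin s, (f p : ℕ) = ((p.2 : ℕ) + (p.1 : ℕ) * n) % r :=
    fun p => rfl
  -- step fact
  have hstep : ∀ (t : Fin y) (c : Fin s),
      ((f (t, c) : ℕ) + n) % r = (f (t + 1, c) : ℕ) := by
    intro t c
    rw [hfval, hfval]
    have h1 : (((c:ℕ) + (t:ℕ) * n) % r + n) % r = ((c:ℕ) + (((t:ℕ) + 1)) * n) % r := by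
      rw [Nat.mod_add_mod]
      congr 1
      ring
    rw [h1]
    have htv : (((t + 1 : Fin y)) : ℕ) = ((t:ℕ) + 1) % y := by
      rw [Fin.add_def, Fin.val_one']
      exact Nat.add_mod_mod _ _ _
    rw [htv]
    set q := ((t:ℕ) + 1) / y with hq
    set w := ((t:ℕ) + 1) % y with hw
    have hqr : y * q + w = (t:ℕ) + 1 := Nat.div_add_mod _ _
    have hnum : (c:ℕ) + ((t:ℕ) + 1) * n = ((c:ℕ) + w * n) + (q * x) * r := by
      rw [← hqr]
      have : y * q * n = q * x * r := by
        rw [show y * q * n = q * (y * n) by ring, hyn]; ring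
      nlinarith [this]
    rw [hnum, Nat.add_mul_mod_self_right]
  -- injectivity
  have hinj : Function.Injective f := by
    rintro ⟨t, c⟩ ⟨t', c'⟩ h
    have hv : ((c:ℕ) + (t:ℕ) * n) % r = ((c':ℕ) + (t':ℕ) * n) % r := by
      have := congrArg Fin.val h
      rwa [hfval, hfval] at this
    have hm : (c:ℕ) + (t:ℕ) * n ≡ (c':ℕ) + (t':ℕ) * n [MOD r] := hv
    have hsn : s ∣ n := ⟨x, by rw [hx]; ring⟩
    have hsr : s ∣ r := ⟨y, by rw [hy]; ring⟩
    have hms : (c:ℕ) + (t:ℕ) * n ≡ (c':ℕ) + (t':ℕ) * n [MOD s] := hm.of_dvd hsr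
    have htn : ∀ u : Fin y, (u:ℕ) * n ≡ 0 [MOD s] := by
      intro u
      exact (Nat.modEq_zero_iff_dvd).mpr (Dvd.dvd.mul_left hsn _)
    have e1 : (c:ℕ) + (t:ℕ) * n ≡ (c:ℕ) [MOD s] := by
      simpa using Nat.ModEq.add_left (c:ℕ) (htn t)
    have e2 : (c':ℕ) + (t':ℕ) * n ≡ (c':ℕ) [MOD s] := by
      simpa using Nat.ModEq.add_left (c':ℕ) (htn t')
    have hcc : (c:ℕ) ≡ (c':ℕ) [MOD s] := e1.symm.trans (hms.trans e2)
    have hc : c = c' := by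
      apply Fin.ext
      have := hcc
      unfold Nat.ModEq at this
      rwa [Nat.mod_eq_of_lt c.isLt, Nat.mod_eq_of_lt c'.isLt] at this
    subst hc
    have hm2 : (t:ℕ) * n ≡ (t':ℕ) * n [MOD r] := hm.add_left_cancel' (c:ℕ)
    have hm3 : ((t:ℕ) * x) * s ≡ ((t':ℕ) * x) * s [MOD y * s] := by
      have : (t:ℕ) * n = ((t:ℕ) * x) * s := by rw [hx]; ring
      have h2 : (t':ℕ) * n = ((t':ℕ) * x) * s := by rw [hx]; ring
      rw [← this, ← h2, ← hy]
      exact hm2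
    have hm4 : (t:ℕ) * x ≡ (t':ℕ) * x [MOD y] :=
      Nat.ModEq.mul_right_cancel' hs0.ne' hm3
    have hm5 : (t:ℕ) ≡ (t':ℕ) [MOD y] := hm4.cancel_right_of_coprime (by rwa [Nat.gcd_comm])
    have ht : t = t' := by
      apply Fin.ext
      have := hm5
      unfold Nat.ModEq at this
      rwa [Nat.mod_eq_of_lt t.isLt, Nat.mod_eq_of_lt t'.isLt] at this
    rw [ht]
  have hbij : Function.Bijective f := by
    rw [Fintype.bijective_iff_injective_and_card]
    refine ⟨hinj, ?_⟩
    simp [hy, Nat.mul_comm]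
  set e : Fin y × Fin s ≃ Fin r := Equiv.ofBijective f hbij with he
  have heval : ∀ p, e p = f p := fun p => rfl
  -- sign function
  set d : Fin y → Fin s → ℤ :=
    fun t c => (-1) ^ ((((c:ℕ) + (t:ℕ) * n) % r + n) / r) with hd
  -- rewrite the power
  rw [pow_shift r hr Sr hSr n]
  set M : Matrix (Fin r) (Fin r) ℤ := Matrix.of (fun i j : Fin r =>
      if ((i:ℕ) + n) % r = (j:ℕ) then (-1:ℤ)^(((i:ℕ) + n)/r) else 0) with hM
  -- block diagonal form
  have hblock : (1 + M).submatrix e e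
      = Matrix.blockDiagonal (fun c : Fin s => Matrix.of fun t t' : Fin y =>
          (if t' = t then (1:ℤ) else 0) + (if t' = t + 1 then d t c else 0)) := by
    ext ⟨t, c⟩ ⟨t', c'⟩
    rw [Matrix.submatrix_apply, Matrix.add_apply, Matrix.one_apply, heval, heval,
      Matrix.blockDiagonal_apply]
    have hMval : M (f (t, c)) (f (t', c'))
        = if ((f (t,c) : ℕ) + n) % r = (f (t',c') : ℕ) then d t c else 0 := by
      rfl
    rw [hMval]
    have hcond1 : (f (t, c) = f (t', c')) ↔ (t = t' ∧ c = c') := by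
      constructor
      · intro h
        have := hinj h
        exact ⟨congrArg Prod.fst this, congrArg Prod.snd this⟩
      · rintro ⟨rfl, rfl⟩; rfl
    have hcond2 : (((f (t,c) : ℕ) + n) % r = (f (t',c') : ℕ)) ↔ (t' = t + 1 ∧ c' = c) := by
      rw [hstep t c]
      constructor
      · intro h
        have := hinj (Fin.ext h : f (t + 1, c) = f (t', c'))
        exact ⟨(congrArg Prod.fst this).symm, (congrArg Prod.snd this).symm⟩
      · rintro ⟨rfl, rfl⟩; rfl
    rw [if_congr hcond1 rfl rfl, if_congr hcond2 rfl rfl]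
    by_cases hc : c = c'
    · subst hc
      rw [if_pos rfl]
      simp only [Matrix.of_apply, eq_self_iff_true, and_true]
      congr 1
      by_cases ht : t' = t
      · rw [if_pos ht.symm, if_pos ht]
      · rw [if_neg (fun h => ht h.symm), if_neg ht]
    · rw [if_neg hc, if_neg (fun h : _ ∧ _ => hc h.2), if_neg (fun h : _ ∧ _ => hc h.2.symm)]
      norm_num
  -- now compute the determinant
  rw [← Matrix.det_submatrix_equiv_self e (1 + M), hblock, Matrix.det_blockDiagonal]
  have hfactor : ∀ c : Fin s,
      (Matrix.of fun t t' : Fin y =>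
        (if t' = t then (1:ℤ) else 0) + (if t' = t + 1 then d t c else 0)).det = 2 := by
    intro c
    rw [det_cycle y (fun t => d t c)]
    -- the product of signs around a cycle is (-1)^x
    have hprod : ∏ t : Fin y, d t c = (-1) ^ x := by
      have hdval : ∀ t : Fin y, d t c
          = (-1:ℤ) ^ ((((c:ℕ) + (t:ℕ) * n) % r + n) / r) := fun t => rfl
      set w : Fin y → ℕ := fun t => (((c:ℕ) + (t:ℕ) * n) % r + n) / r with hw
      set g : Fin y → ℕ := fun t => ((c:ℕ) + (t:ℕ) * n) % r with hg
      have hkey : ∀ t : Fin y, g t + n = r * w t + g (t + 1) := by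
        intro t
        have h2 : (g t + n) % r = g (t + 1) := by
          have := hstep t c
          rw [hfval, hfval] at this
          exact this
        rw [← h2]
        exact (Nat.div_add_mod (g t + n) r).symm
      have hshift : ∑ t : Fin y, g (t + 1) = ∑ t : Fin y, g t :=
        Fintype.sum_bijective (· + (1 : Fin y)) (Equiv.addRight (1 : Fin y)).bijective
          (fun t => g (t + 1)) g (fun t => rfl)
      have hsum : ∑ t : Fin y, (g t + n) = ∑ t : Fin y, (r * w t + g (t + 1)) :=
        Finset.sum_congr rfl (fun t _ => hkey t)
      rw [Finset.sum_add_distrib, Finset.sum_add_distrib, hshift, Finset.sum_const,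
        ← Finset.mul_sum, Finset.card_univ, Fintype.card_fin, smul_eq_mul] at hsum
      have hsw : r * (∑ t : Fin y, w t) = r * x := by
        have : y * n = r * (∑ t : Fin y, w t) := by omega
        rw [← this, hyn]; ring
      have hswx : ∑ t : Fin y, w t = x := Nat.eq_of_mul_eq_mul_left hr0 hsw
      calc ∏ t : Fin y, d t c = ∏ t : Fin y, (-1:ℤ) ^ (w t) :=
            Finset.prod_congr rfl (fun t _ => hdval t)
        _ = (-1:ℤ) ^ (∑ t : Fin y, w t) := Finset.prod_pow_eq_pow_sum _ _ _
        _ = (-1:ℤ) ^ x := by rw [hswx]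
    rw [hprod, ← pow_add]
    have heven : Even (y - 1 + x) := by
      rcases hpar with ⟨⟨a, ha⟩, ⟨b, hb⟩⟩ | ⟨⟨a, ha⟩, ⟨b, hb⟩⟩
      · exact ⟨b + a, by omega⟩
      · exact ⟨a + b, by omega⟩
    rw [heven.neg_one_pow]
    norm_num
  calc ∏ c : Fin s, (Matrix.of fun t t' : Fin y =>
        (if t' = t then (1:ℤ) else 0) + (if t' = t + 1 then d t c else 0)).det
      = ∏ c : Fin s, (2:ℤ) := Finset.prod_congr rfl (fun c _ => hfactor c)
    _ = 2 ^ s := by simp
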